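/- There is an absolute constant c such that for all natural numbers n ≥ 1 and s with 1 ≤ s ≤ n, every function f : ({0,1}^n) × ({0,1}^n) → {0,1} that is computed by a space-s communication protocol is computed by a Boolean circuit with 2n inputs of size at most c · n · 2^(n + 2s). -/

import Mathlib

inductive GateLabel where
  | and | or | not
deriving DecidableEq

/-- A Boolean circuit with `m` inputs: a sequence of gates, each labeled ∧, ∨ (fan-in 2)
or ¬ (fan-in 1), taking inputs from among the `m` input variables and earlier gates
(wire `w < m` is input variable `w`; wire `m + g` is gate `g`); one gate is the output gate. -/
structure Circuit (m : ℕ) where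
  size : ℕ
  label : Fin size → GateLabel
  in1 : (g : Fin size) → Fin (m + g.val)
  in2 : (g : Fin size) → Fin (m + g.val)
  out : Fin size

namespace Circuit

/-- The value carried on wire `w` when the circuit is evaluated on input `x`. -/
def wire {m : ℕ} (C : Circuit m) (x : Fin m → Bool) (w : ℕ) (hw : w < m + C.size) : Bool :=
  if h : w < m then x ⟨w, h⟩
  else
    have hg : w - m < C.size := by omega
    have h1 : ((C.in1 ⟨w - m, hg⟩ : Fin _) : ℕ) < w := by
      have := (C.in1 ⟨w - m, hg⟩).isLt; simp only [Fin.val_mk] at this; omega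
    have h2 : ((C.in2 ⟨w - m, hg⟩ : Fin _) : ℕ) < w := by
      have := (C.in2 ⟨w - m, hg⟩).isLt; simp only [Fin.val_mk] at this; omega
    match C.label ⟨w - m, hg⟩ with
    | .not => !(C.wire x (C.in1 ⟨w - m, hg⟩) (by omega))
    | .and => (C.wire x (C.in1 ⟨w - m, hg⟩) (by omega)) && (C.wire x (C.in2 ⟨w - m, hg⟩) (by omega))
    | .or => (C.wire x (C.in1 ⟨w - m, hg⟩) (by omega)) || (C.wire x (C.in2 ⟨w - m, hg⟩) (by omega))
termination_by w

/-- The output of the circuit on input `x`. -/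
def eval {m : ℕ} (C : Circuit m) (x : Fin m → Bool) : Bool :=
  C.wire x (m + C.out.val) (by omega)

end Circuit

/-- One run of a space-`s` communication protocol given by transition functions
`A, B : {0,1}^n × {0,1}^s → {0,1}^s ⊕ {0,1}` on inputs `x, y`: the `s`-bit shared memory
starts all zeros, Alice and Bob alternate turns starting with Alice, and on a turn the
active player either rewrites the shared memory or halts with an output bit, as a function
of their own input and the current memory contents only.  `protoRun A B x y t` is the
state after `t` turns: either `Sum.inl` of the current memory contents, or `Sum.inr` of
the output bit if the protocol has halted (halting is absorbing). -/
def protoRun {n s : ℕ} (A B : (Fin n → Bool) → (Fin s → Bool) → (Fin s → Bool) ⊕ Bool)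
    (x y : Fin n → Bool) : ℕ → (Fin s → Bool) ⊕ Bool
  | 0 => Sum.inl (fun _ => false)
  | t + 1 =>
    match protoRun A B x y t with
    | Sum.inr z => Sum.inr z
    | Sum.inl mem => if t % 2 = 0 then A x mem else B y mem

/-- The protocol `(A, B)` computes `f` if on every input pair `(x, y)` it eventually
halts with output `f (x, y)`. -/
def ProtoComputes {n s : ℕ} (A B : (Fin n → Bool) → (Fin s → Bool) → (Fin s → Bool) ⊕ Bool)
    (f : (Fin n → Bool) × (Fin n → Bool) → Bool) : Prop :=
  ∀ x y : Fin n → Bool, ∃ t : ℕ, protoRun A B x y t = Sum.inr (f (x, y))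

/-- The `2n`-bit input obtained by concatenating `x` and `y`. -/
def joinInput {n : ℕ} (x y : Fin n → Bool) : Fin (2 * n) → Bool := fun i =>
  if h : (i : ℕ) < n then x ⟨i, h⟩ else y ⟨(i : ℕ) - n, by have := i.isLt; omega⟩

namespace SP
open Circuit

def gval : GateLabel → Bool → Bool → Bool
  | .and, u, v => u && v
  | .or, u, v => u || v
  | .not, u, _ => !u

variable {m : ℕ}

/-- Total version of `wire`. -/
def wireN (C : Circuit m) (x : Fin m → Bool) (w : ℕ) : Bool :=
  if h : w < m + C.size then C.wire x w h else false

lemma wireN_input (C : Circuit m) (x : Fin m → Bool) (w : ℕ) (h : w < m) :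
    wireN C x w = x ⟨w, h⟩ := by
  have h2 : w < m + C.size := by omega
  rw [wireN, dif_pos h2, Circuit.wire, dif_pos h]

lemma wireN_gate (C : Circuit m) (x : Fin m → Bool) (w : ℕ) (hw : m ≤ w)
    (h : w < m + C.size) (hg : w - m < C.size) :
    wireN C x w = gval (C.label ⟨w - m, hg⟩)
      (wireN C x (C.in1 ⟨w - m, hg⟩)) (wireN C x (C.in2 ⟨w - m, hg⟩)) := by
  have h1 : ((C.in1 ⟨w - m, hg⟩ : Fin _) : ℕ) < m + C.size := by
    have := (C.in1 ⟨w - m, hg⟩).isLt; simp only [Fin.val_mk] at this; omega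
  have h2 : ((C.in2 ⟨w - m, hg⟩ : Fin _) : ℕ) < m + C.size := by
    have := (C.in2 ⟨w - m, hg⟩).isLt; simp only [Fin.val_mk] at this; omega
  rw [wireN, dif_pos h, Circuit.wire, dif_neg (by omega : ¬ w < m)]
  rcases hl : C.label ⟨w - m, hg⟩ with _ | _ | _ <;>
    simp only [hl, gval, wireN, dif_pos h1, dif_pos h2]

end SP
namespace SP
variable {m : ℕ}

def Computes (C : Circuit m) (w : ℕ) (g : (Fin m → Bool) → Bool) : Prop :=
  w < m + C.size ∧ ∀ x, wireN C x w = g x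

def Ext (C C' : Circuit m) : Prop :=
  C.size ≤ C'.size ∧ ∀ x w, w < m + C.size → wireN C' x w = wireN C x w

lemma Ext.refl (C : Circuit m) : Ext C C := ⟨le_refl _, fun _ _ _ => rfl⟩

lemma Ext.trans {C1 C2 C3 : Circuit m} (h12 : Ext C1 C2) (h23 : Ext C2 C3) : Ext C1 C3 :=
  ⟨le_trans h12.1 h23.1, fun x w hw => by
    have h1 := h12.1
    rw [h23.2 x w (by omega), h12.2 x w hw]⟩

lemma Computes.mono {C C' : Circuit m} {w g} (h : Computes C w g) (he : Ext C C') :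
    Computes C' w g :=
  ⟨by have := he.1; have := h.1; omega, fun x => by rw [he.2 x w h.1, h.2]⟩

lemma computes_input (C : Circuit m) (i : ℕ) (hi : i < m) :
    Computes C i (fun x => x ⟨i, hi⟩) :=
  ⟨by omega, fun x => wireN_input C x i hi⟩

def push (C : Circuit m) (l : GateLabel) (a b : ℕ) (ha : a < m + C.size)
    (hb : b < m + C.size) : Circuit m where
  size := C.size + 1
  label := fun g => if h : g.val < C.size then C.label ⟨g.val, h⟩ else l
  in1 := fun g => if h : g.val < C.size then
      ⟨(C.in1 ⟨g.val, h⟩ : Fin _).val, by have := (C.in1 ⟨g.val, h⟩).isLt; simpa using this⟩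
    else ⟨a, by have := g.isLt; omega⟩
  in2 := fun g => if h : g.val < C.size then
      ⟨(C.in2 ⟨g.val, h⟩ : Fin _).val, by have := (C.in2 ⟨g.val, h⟩).isLt; simpa using this⟩
    else ⟨b, by have := g.isLt; omega⟩
  out := ⟨C.size, by omega⟩

lemma push_ext (C : Circuit m) (l : GateLabel) (a b : ℕ) (ha : a < m + C.size)
    (hb : b < m + C.size) : Ext C (push C l a b ha hb) := by
  refine ⟨by simp [push], fun x w hw => ?_⟩
  induction w using Nat.strong_induction_on with
  | _ w ih =>
    by_cases hwm : w < m
    · rw [wireN_input _ x w hwm, wireN_input _ x w hwm]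
    · have hg : w - m < C.size := by omega
      have hg' : w - m < (push C l a b ha hb).size := by simp [push]; omega
      rw [wireN_gate _ x w (by omega) (by simp [push]; omega) hg',
          wireN_gate C x w (by omega) hw hg]
      have hlab : (push C l a b ha hb).label ⟨w - m, hg'⟩ = C.label ⟨w - m, hg⟩ := by
        simp [push, hg]
      have hin1 : ((push C l a b ha hb).in1 ⟨w - m, hg'⟩ : ℕ) = (C.in1 ⟨w - m, hg⟩ : ℕ) := by
        simp [push, hg]
      have hin2 : ((push C l a b ha hb).in2 ⟨w - m, hg'⟩ : ℕ) = (C.in2 ⟨w - m, hg⟩ : ℕ) := by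
        simp [push, hg]
      rw [hlab, hin1, hin2]
      have hi1 : ((C.in1 ⟨w - m, hg⟩ : Fin _) : ℕ) < w := by
        have := (C.in1 ⟨w - m, hg⟩).isLt; simp only [Fin.val_mk] at this; omega
      have hi2 : ((C.in2 ⟨w - m, hg⟩ : Fin _) : ℕ) < w := by
        have := (C.in2 ⟨w - m, hg⟩).isLt; simp only [Fin.val_mk] at this; omega
      rw [ih _ hi1 (by omega), ih _ hi2 (by omega)]

lemma push_computes (C : Circuit m) (l : GateLabel) (a b : ℕ) {ga gb}
    (hca : Computes C a ga) (hcb : Computes C b gb) :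
    Computes (push C l a b hca.1 hcb.1) (m + C.size) (fun x => gval l (ga x) (gb x)) := by
  have hca1 := hca.1
  have hcb1 := hcb.1
  have hsz : (push C l a b hca.1 hcb.1).size = C.size + 1 := rfl
  refine ⟨by omega, fun x => ?_⟩
  have hg : m + C.size - m < (push C l a b hca.1 hcb.1).size := by omega
  rw [wireN_gate _ x (m + C.size) (by omega) (by omega) hg]
  have he := push_ext C l a b hca.1 hcb.1
  have hlab : (push C l a b hca.1 hcb.1).label ⟨m + C.size - m, hg⟩ = l := by
    simp [push]
  have hin1 : ((push C l a b hca.1 hcb.1).in1 ⟨m + C.size - m, hg⟩ : ℕ) = a := by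
    simp [push]
  have hin2 : ((push C l a b hca.1 hcb.1).in2 ⟨m + C.size - m, hg⟩ : ℕ) = b := by
    simp [push]
  rw [hlab, hin1, hin2, he.2 x a hca.1, he.2 x b hcb.1, hca.2, hcb.2]

end SP
namespace SP
variable {m : ℕ}

/-- Big OR of a list of specs, given a false wire. -/
lemma bigOr (C : Circuit m) (L : List ((Fin m → Bool) → Bool))
    (hL : ∀ g ∈ L, ∃ w, Computes C w g) (hF : ∃ w, Computes C w (fun _ => false)) :
    ∃ C', Ext C C' ∧ C'.size ≤ C.size + L.length ∧
      ∃ w, Computes C' w (fun x => L.any (fun g => g x)) := by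
  induction L with
  | nil =>
    exact ⟨C, Ext.refl C, by simp, hF.choose, by simpa using hF.choose_spec⟩
  | cons g L ih =>
    obtain ⟨C1, he1, hsz1, w1, hw1⟩ := ih (fun g' hg' => hL g' (List.mem_cons_of_mem _ hg'))
    obtain ⟨wg, hwg⟩ := hL g List.mem_cons_self
    have hwg1 : Computes C1 wg g := hwg.mono he1
    have hp := push_computes C1 .or wg w1 hwg1 hw1
    refine ⟨push C1 .or wg w1 hwg1.1 hw1.1,
      he1.trans (push_ext C1 .or wg w1 hwg1.1 hw1.1), ?_, m + C1.size, ?_⟩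
    · have : (push C1 .or wg w1 hwg1.1 hw1.1).size = C1.size + 1 := rfl
      simp only [List.length_cons]; omega
    · refine ⟨hp.1, fun x => ?_⟩
      rw [hp.2]
      simp [gval]

lemma bigAnd (C : Circuit m) (L : List ((Fin m → Bool) → Bool))
    (hL : ∀ g ∈ L, ∃ w, Computes C w g) (hT : ∃ w, Computes C w (fun _ => true)) :
    ∃ C', Ext C C' ∧ C'.size ≤ C.size + L.length ∧
      ∃ w, Computes C' w (fun x => L.all (fun g => g x)) := by
  induction L with
  | nil =>
    exact ⟨C, Ext.refl C, by simp, hT.choose, by simpa using hT.choose_spec⟩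
  | cons g L ih =>
    obtain ⟨C1, he1, hsz1, w1, hw1⟩ := ih (fun g' hg' => hL g' (List.mem_cons_of_mem _ hg'))
    obtain ⟨wg, hwg⟩ := hL g List.mem_cons_self
    have hwg1 : Computes C1 wg g := hwg.mono he1
    have hp := push_computes C1 .and wg w1 hwg1 hw1
    refine ⟨push C1 .and wg w1 hwg1.1 hw1.1,
      he1.trans (push_ext C1 .and wg w1 hwg1.1 hw1.1), ?_, m + C1.size, ?_⟩
    · have : (push C1 .and wg w1 hwg1.1 hw1.1).size = C1.size + 1 := rfl
      simp only [List.length_cons]; omega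
    · refine ⟨hp.1, fun x => ?_⟩
      rw [hp.2]
      simp [gval]

/-- Build wires for a whole family of specs, `K` gates each. -/
lemma build_many {α : Type*} (C : Circuit m) (L : List α) (G : α → (Fin m → Bool) → Bool)
    (K : ℕ)
    (step : ∀ C' : Circuit m, Ext C C' → ∀ a ∈ L, ∃ C'', Ext C' C'' ∧
      C''.size ≤ C'.size + K ∧ ∃ w, Computes C'' w (G a)) :
    ∃ C', Ext C C' ∧ C'.size ≤ C.size + K * L.length ∧
      ∀ a ∈ L, ∃ w, Computes C' w (G a) := by
  induction L with
  | nil => exact ⟨C, Ext.refl C, by simp, by simp⟩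
  | cons a L ih =>
    obtain ⟨C1, he1, hsz1, hw1⟩ := ih (fun C' he a' ha' => step C' he a' (List.mem_cons_of_mem _ ha'))
    obtain ⟨C2, he2, hsz2, w, hw⟩ := step C1 he1 a List.mem_cons_self
    refine ⟨C2, he1.trans he2, ?_, ?_⟩
    · simp only [List.length_cons]; nlinarith [hsz1, hsz2]
    · intro a' ha'
      rcases List.mem_cons.mp ha' with h | h
      · exact ⟨w, h ▸ hw⟩
      · obtain ⟨w', hw'⟩ := hw1 a' h
        exact ⟨w', hw'.mono he2⟩

end SP
namespace SP
variable {m : ℕ}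

def HasTF (C : Circuit m) : Prop :=
  (∃ w, Computes C w (fun _ => true)) ∧ (∃ w, Computes C w (fun _ => false))

lemma HasTF.mono {C C' : Circuit m} (h : HasTF C) (he : Ext C C') : HasTF C' :=
  ⟨⟨h.1.choose, h.1.choose_spec.mono he⟩, ⟨h.2.choose, h.2.choose_spec.mono he⟩⟩

lemma Computes.congr {C : Circuit m} {w g g'} (h : Computes C w g)
    (hgg : ∀ x, g x = g' x) : Computes C w g' :=
  ⟨h.1, fun x => by rw [h.2, hgg]⟩

/-- A 3-gate base circuit providing constant-true and constant-false wires. -/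
lemma baseTF (hm : 0 < m) : ∃ C : Circuit m, C.size = 3 ∧ HasTF C := by
  let C0 : Circuit m :=
    { size := 1, label := fun _ => .not, in1 := fun _ => ⟨0, by omega⟩,
      in2 := fun _ => ⟨0, by omega⟩, out := ⟨0, one_pos⟩ }
  have hs0 : C0.size = 1 := rfl
  have h0 : Computes C0 m (fun x => !(x ⟨0, hm⟩)) := by
    refine ⟨by omega, fun x => ?_⟩
    rw [wireN_gate C0 x m le_rfl (by omega) (by omega)]
    have hl : C0.label ⟨m - m, by omega⟩ = .not := rfl
    have h1 : ((C0.in1 ⟨m - m, by omega⟩ : Fin _) : ℕ) = 0 := rfl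
    rw [hl, h1]
    simp [gval, wireN_input C0 x 0 hm]
  have hx0 : Computes C0 0 (fun x => x ⟨0, hm⟩) := computes_input C0 0 hm
  have hC1 := push_computes C0 .and 0 m hx0 h0
  have he1 := push_ext C0 .and 0 m hx0.1 h0.1
  set C1 := push C0 .and 0 m hx0.1 h0.1 with hC1def
  have h0' : Computes C1 m (fun x => !(x ⟨0, hm⟩)) := h0.mono he1
  have hx0' : Computes C1 0 (fun x => x ⟨0, hm⟩) := hx0.mono he1
  have hC2 := push_computes C1 .or 0 m hx0' h0'
  have he2 := push_ext C1 .or 0 m hx0'.1 h0'.1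
  refine ⟨push C1 .or 0 m hx0'.1 h0'.1, rfl, ?_, ?_⟩
  · exact ⟨m + C1.size, hC2.congr (fun x => by simp [gval])⟩
  · exact ⟨m + C0.size, (hC1.mono he2).congr (fun x => by simp [gval])⟩

/-- Truth-table circuit: computes any function of `k` already-computed wires. -/
lemma ttable (C : Circuit m) (hTF : HasTF C) {k : ℕ} (v : Fin k → (Fin m → Bool) → Bool)
    (hv : ∀ i, ∃ w, Computes C w (v i)) (h : (Fin k → Bool) → Bool) :
    ∃ C', Ext C C' ∧ C'.size ≤ C.size + (k + 2) * 2 ^ k ∧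
      ∃ w, Computes C' w (fun z => h (fun i => v i z)) := by
  classical
  -- Step 1: negation wires
  obtain ⟨C1, he1, hsz1, hneg⟩ := build_many C (List.finRange k)
    (fun i => fun z => !(v i z)) 1 (by
      intro C' he i _
      obtain ⟨w, hw⟩ := hv i
      have hw' := hw.mono he
      exact ⟨push C' .not w w hw'.1 hw'.1, push_ext C' .not w w hw'.1 hw'.1, le_refl _,
        m + C'.size, (push_computes C' .not w w hw' hw').congr (fun z => rfl)⟩)
  -- Step 2: minterm wires
  obtain ⟨C2, he2, hsz2, hmint⟩ := build_many C1 (Finset.univ.toList : List (Fin k → Bool))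
    (fun a => fun z => decide (∀ i, v i z = a i)) k (by
      intro C' he a _
      have hlits : ∀ g ∈ List.ofFn (fun i : Fin k =>
          if a i then v i else (fun z => !(v i z))), ∃ w, Computes C' w g := by
        intro g hg
        obtain ⟨i, rfl⟩ := List.mem_ofFn.mp hg
        by_cases hai : a i = true
        · obtain ⟨w, hw⟩ := hv i
          exact ⟨w, ((hw.mono he1).mono he).congr (fun z => by simp [hai])⟩
        · obtain ⟨w, hw⟩ := hneg i (List.mem_finRange i)
          exact ⟨w, (hw.mono he).congr (fun z => by simp [hai])⟩
      obtain ⟨C'', he'', hsz'', w, hw⟩ := bigAnd C' _ hlits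
        ((hTF.mono (he1.trans he)).1)
      refine ⟨C'', he'', by simpa using hsz'', w, hw.congr (fun z => ?_)⟩
      apply Bool.coe_iff_coe.mp
      simp [List.all_eq_true, List.mem_ofFn]
      constructor
      · intro hh i
        have := hh i
        cases hai : a i <;> simp [hai] at this ⊢ <;> simp [this]
      · intro hh i
        cases hai : a i <;> simp [hai, hh i])
  -- Step 3: big OR of minterms selected by h
  have hTF2 : HasTF C2 := hTF.mono (he1.trans he2)
  obtain ⟨C3, he3, hsz3, w, hw⟩ := bigOr C2
    ((Finset.univ.toList : List (Fin k → Bool)).map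
      (fun a => fun z => decide (∀ i, v i z = a i) && h a))
    (by
      intro g hg
      obtain ⟨a, _, rfl⟩ := List.mem_map.mp hg
      by_cases ha : h a = true
      · obtain ⟨w, hw⟩ := hmint a (Finset.mem_toList.mpr (Finset.mem_univ a))
        exact ⟨w, hw.congr (fun z => by simp [ha])⟩
      · obtain ⟨w, hw⟩ := hTF2.2
        exact ⟨w, hw.congr (fun z => by simp [Bool.eq_false_iff.mpr ha])⟩)
    hTF2.2
  refine ⟨C3, (he1.trans he2).trans he3, ?_, w, hw.congr (fun z => ?_)⟩
  · have hlen : ((Finset.univ.toList : List (Fin k → Bool)).map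
      (fun a => fun z => decide (∀ i, v i z = a i) && h a)).length = 2 ^ k := by
      simp [Finset.length_toList]
    have hcard : (Finset.univ.toList : List (Fin k → Bool)).length = 2 ^ k := by
      simp [Finset.length_toList]
    have hk2 : k ≤ 2 ^ k := Nat.le_of_lt (Nat.lt_two_pow_self (n := k))
    rw [hlen] at hsz3
    rw [hcard] at hsz2
    simp only [List.length_finRange] at hsz1
    nlinarith [hsz1, hsz2, hsz3, hk2]
  · apply Bool.coe_iff_coe.mp
    simp only [List.any_eq_true, List.mem_map]
    constructor
    · rintro ⟨g, ⟨a, _, rfl⟩, hg⟩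
      simp only [Bool.and_eq_true, decide_eq_true_eq] at hg
      have : (fun i => v i z) = a := funext hg.1
      rw [this]; exact hg.2
    · intro hz
      refine ⟨_, ⟨fun i => v i z, Finset.mem_toList.mpr (Finset.mem_univ _), rfl⟩, ?_⟩
      simp [hz]

end SP
namespace SP
variable {n s : ℕ} (A B : (Fin n → Bool) → (Fin s → Bool) → (Fin s → Bool) ⊕ Bool)
variable (x y : Fin n → Bool)

lemma protoRun_succ (t : ℕ) : protoRun A B x y (t + 1) =
    match protoRun A B x y t with
    | Sum.inr z => Sum.inr z
    | Sum.inl mem => if t % 2 = 0 then A x mem else B y mem := rfl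

lemma protoRun_absorb {t : ℕ} {z : Bool} (h : protoRun A B x y t = Sum.inr z) :
    ∀ t' ≥ t, protoRun A B x y t' = Sum.inr z := by
  intro t' ht'
  obtain ⟨k, rfl⟩ : ∃ k, t' = t + k := ⟨t' - t, by omega⟩
  induction k with
  | zero => exact h
  | succ u ih =>
    rw [show t + (u + 1) = (t + u) + 1 by omega, protoRun_succ, ih (by omega)]

lemma protoRun_periodic {t1 t2 : ℕ} (hpar : t1 % 2 = t2 % 2)
    (heq : protoRun A B x y t1 = protoRun A B x y t2) :
    ∀ k, protoRun A B x y (t1 + k) = protoRun A B x y (t2 + k) := by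
  intro k
  induction k with
  | zero => simpa using heq
  | succ j ih =>
    have h1 : t1 + (j + 1) = (t1 + j) + 1 := by omega
    have h2 : t2 + (j + 1) = (t2 + j) + 1 := by omega
    rw [h1, h2, protoRun_succ, protoRun_succ, ih,
      show (t1 + j) % 2 = (t2 + j) % 2 by omega]

/-- Any protocol that ever halts must halt within `2 * 2 ^ s + 1` steps. -/
lemma protoRun_halt_by {t0 : ℕ} {z : Bool} (h : protoRun A B x y t0 = Sum.inr z) :
    protoRun A B x y (2 * 2 ^ s + 1) = Sum.inr z := by
  classical
  by_cases hT : t0 ≤ 2 * 2 ^ s + 1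
  · exact protoRun_absorb A B x y h _ (by omega)
  · by_cases hex : ∃ t ≤ 2 * 2 ^ s, ∃ z', protoRun A B x y t = Sum.inr z'
    · obtain ⟨t, ht, z', hz'⟩ := hex
      have h1 := protoRun_absorb A B x y hz' t0 (by omega)
      rw [h] at h1
      have : z' = z := by injection h1.symm
      subst this
      exact protoRun_absorb A B x y hz' _ (by omega)
    · exfalso
      push_neg at hex
      have hall : ∀ t : ℕ, t ≤ 2 * 2 ^ s → ∃ mem, protoRun A B x y t = Sum.inl mem := by
        intro t ht
        rcases hv : protoRun A B x y t with mem | z'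
        · exact ⟨mem, rfl⟩
        · exact absurd hv (hex t ht z')
      -- pigeonhole on (parity, memory)
      set F : Fin (2 * 2 ^ s + 1) → Bool × (Fin s → Bool) :=
        fun t => (decide (t.val % 2 = 0), (hall t.val (by omega)).choose) with hF
      have hcard : Fintype.card (Bool × (Fin s → Bool)) < Fintype.card (Fin (2 * 2 ^ s + 1)) := by
        simp [Fintype.card_fun]
      have main : ∀ a b : Fin (2 * 2 ^ s + 1), a.val < b.val → F a = F b → False := by
        intro a b hab heq
        have hpar : a.val % 2 = b.val % 2 := by
          have hfst := congrArg Prod.fst heq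
          simp only [hF] at hfst
          have hiff : a.val % 2 = 0 ↔ b.val % 2 = 0 := decide_eq_decide.mp hfst
          by_cases ha2 : a.val % 2 = 0
          · have := hiff.mp ha2; omega
          · have : ¬ b.val % 2 = 0 := fun hb => ha2 (hiff.mpr hb)
            omega
        have hmem : protoRun A B x y a.val = protoRun A B x y b.val := by
          have hsnd := congrArg Prod.snd heq
          simp only [hF] at hsnd
          rw [(hall a.val (by omega)).choose_spec, (hall b.val (by omega)).choose_spec, hsnd]
        have hperiod := protoRun_periodic A B x y hpar hmem
        have hallt : ∀ t, ∃ mem, protoRun A B x y t = Sum.inl mem := by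
          intro t
          induction t using Nat.strong_induction_on with
          | _ t ih =>
            by_cases ht : t ≤ 2 * 2 ^ s
            · exact hall t ht
            · have hbb : b.val ≤ 2 * 2 ^ s := by have := b.isLt; omega
              have hgeb : b.val ≤ t := by omega
              have hper := hperiod (t - b.val)
              rw [show b.val + (t - b.val) = t by omega] at hper
              obtain ⟨mem, hm⟩ := ih (a.val + (t - b.val)) (by omega)
              exact ⟨mem, by rw [← hper, hm]⟩
        obtain ⟨mem, hm⟩ := hallt t0
        rw [h] at hm
        exact absurd hm (by simp)
      obtain ⟨a, b, hne, heq⟩ := Fintype.exists_ne_map_eq_of_card_lt F hcard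
      have hvne : a.val ≠ b.val := fun hh => hne (Fin.ext hh)
      rcases Nat.lt_or_ge a.val b.val with hab | hab
      · exact main a b hab heq
      · exact main b a (by omega) heq.symm

end SP
namespace SP

def leftIn {n : ℕ} (z : Fin (2 * n) → Bool) : Fin n → Bool :=
  fun i => z ⟨i.val, by omega⟩

def rightIn {n : ℕ} (z : Fin (2 * n) → Bool) : Fin n → Bool :=
  fun i => z ⟨n + i.val, by omega⟩

lemma leftIn_join {n : ℕ} (x y : Fin n → Bool) : leftIn (joinInput x y) = x := by
  funext i
  simp only [leftIn, joinInput]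
  rw [dif_pos (by exact i.isLt)]

lemma rightIn_join {n : ℕ} (x y : Fin n → Bool) : rightIn (joinInput x y) = y := by
  funext i
  simp only [rightIn, joinInput]
  rw [dif_neg (by omega)]
  congr 1
  apply Fin.ext
  simp

variable {n s : ℕ} (A B : (Fin n → Bool) → (Fin s → Bool) → (Fin s → Bool) ⊕ Bool)

def Rspec (t : ℕ) (q : Fin s → Bool) : (Fin (2 * n) → Bool) → Bool :=
  fun z => decide (protoRun A B (leftIn z) (rightIn z) t = Sum.inl q)

def Hspec (t : ℕ) : (Fin (2 * n) → Bool) → Bool :=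
  fun z => decide (protoRun A B (leftIn z) (rightIn z) t = Sum.inr true)

def IndSpec (pl : Bool) (q : Fin s → Bool) (tg : (Fin s → Bool) ⊕ Bool) :
    (Fin (2 * n) → Bool) → Bool :=
  fun z => decide ((if pl then A (leftIn z) q else B (rightIn z) q) = tg)

lemma Rspec_succ (t : ℕ) (q' : Fin s → Bool) (z : Fin (2 * n) → Bool) :
    Rspec A B (t + 1) q' z =
      (Finset.univ.toList : List (Fin s → Bool)).any
        (fun q => Rspec A B t q z && IndSpec A B (decide (t % 2 = 0)) q (Sum.inl q') z) := by
  classical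
  apply Bool.coe_iff_coe.mp
  by_cases ht2 : t % 2 = 0 <;>
    rcases hst : protoRun A B (leftIn z) (rightIn z) t with mem | zz <;>
    simp [Rspec, IndSpec, protoRun_succ, hst, ht2, List.any_eq_true] <;>
    aesop

lemma Hspec_succ (t : ℕ) (z : Fin (2 * n) → Bool) :
    Hspec A B (t + 1) z = (Hspec A B t z ||
      (Finset.univ.toList : List (Fin s → Bool)).any
        (fun q => Rspec A B t q z && IndSpec A B (decide (t % 2 = 0)) q (Sum.inr true) z)) := by
  classical
  apply Bool.coe_iff_coe.mp
  by_cases ht2 : t % 2 = 0 <;>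
    rcases hst : protoRun A B (leftIn z) (rightIn z) t with mem | zz <;>
    simp [Hspec, Rspec, IndSpec, protoRun_succ, hst, ht2, List.any_eq_true] <;>
    aesop

end SP
namespace SP
variable {n s : ℕ} (A B : (Fin n → Bool) → (Fin s → Bool) → (Fin s → Bool) ⊕ Bool)

lemma any_map_pointwise {m : ℕ} {α : Type*} (L : List α) (G : α → (Fin m → Bool) → Bool)
    (z : Fin m → Bool) : (L.map G).any (fun g => g z) = L.any (fun a => G a z) := by
  apply Bool.coe_iff_coe.mp
  simp only [List.any_eq_true, List.mem_map]
  constructor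
  · rintro ⟨g, ⟨a, ha, rfl⟩, hg⟩; exact ⟨a, ha, hg⟩
  · rintro ⟨a, ha, hg⟩; exact ⟨G a, ⟨a, ha, rfl⟩, hg⟩

lemma indicators (hn : 1 ≤ n) :
    ∃ C : Circuit (2 * n), C.size ≤ 3 + (n + 2) * 2 ^ n * (2 * (2 ^ s * (2 ^ s + 2))) ∧
      HasTF C ∧
      ∀ (pl : Bool) (q : Fin s → Bool) (tg : (Fin s → Bool) ⊕ Bool),
        ∃ w, Computes C w (IndSpec A B pl q tg) := by
  classical
  obtain ⟨Cb, hCb, hTFb⟩ := baseTF (show 0 < 2 * n by omega)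
  obtain ⟨C1, he1, hsz1, hind⟩ := build_many Cb
    (Finset.univ.toList : List (Bool × (Fin s → Bool) × ((Fin s → Bool) ⊕ Bool)))
    (fun p => IndSpec A B p.1 p.2.1 p.2.2) ((n + 2) * 2 ^ n) (by
      rintro C' he ⟨pl, q, tg⟩ _
      cases pl
      · obtain ⟨C'', he'', hsz'', w, hw⟩ := ttable C' (hTFb.mono he)
          (fun i : Fin n => fun z => z ⟨n + i.val, by omega⟩)
          (fun i => ⟨n + i.val, computes_input C' (n + i.val) (by omega)⟩)
          (fun a => decide (B a q = tg))
        refine ⟨C'', he'', by simpa using hsz'', w, hw.congr (fun z => rfl)⟩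
      · obtain ⟨C'', he'', hsz'', w, hw⟩ := ttable C' (hTFb.mono he)
          (fun i : Fin n => fun z => z ⟨i.val, by omega⟩)
          (fun i => ⟨i.val, computes_input C' i.val (by omega)⟩)
          (fun a => decide (A a q = tg))
        refine ⟨C'', he'', by simpa using hsz'', w, hw.congr (fun z => rfl)⟩)
  have hlen : (Finset.univ.toList :
      List (Bool × (Fin s → Bool) × ((Fin s → Bool) ⊕ Bool))).length
      = 2 * (2 ^ s * (2 ^ s + 2)) := by
    simp [Finset.length_toList]
  refine ⟨C1, ?_, hTFb.mono he1, fun pl q tg => hind (pl, q, tg) (by simp)⟩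
  rw [hlen] at hsz1
  omega
end SP
namespace SP
variable {n s : ℕ} (A B : (Fin n → Bool) → (Fin s → Bool) → (Fin s → Bool) ⊕ Bool)

lemma layers_main (hn : 1 ≤ n) :
    ∃ C : Circuit (2 * n), C.size ≤ 3 + (n + 2) * 2 ^ n * (2 * (2 ^ s * (2 ^ s + 2)))
        + (2 * 2 ^ s + 1) * (2 * 2 ^ s * 2 ^ s + (2 * 2 ^ s + 1)) ∧
      ∃ w, Computes C w (Hspec A B (2 * 2 ^ s + 1)) := by
  classical
  obtain ⟨C0, hC0sz, hTF0, hind⟩ := indicators A B hn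
  have hlenq : (Finset.univ.toList : List (Fin s → Bool)).length = 2 ^ s := by
    simp [Finset.length_toList]
  have layer : ∀ (t : ℕ) (C' : Circuit (2 * n)), Ext C0 C' →
      (∀ q, ∃ w, Computes C' w (Rspec A B t q)) → (∃ w, Computes C' w (Hspec A B t)) →
      ∃ C'', Ext C' C'' ∧ C''.size ≤ C'.size + (2 * 2 ^ s * 2 ^ s + (2 * 2 ^ s + 1)) ∧
        (∀ q, ∃ w, Computes C'' w (Rspec A B (t + 1) q)) ∧
        (∃ w, Computes C'' w (Hspec A B (t + 1))) := by
    intro t C' heC hR hH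
    have orbuild : ∀ (tg : (Fin s → Bool) ⊕ Bool) (D : Circuit (2 * n)), Ext C' D →
        ∃ D', Ext D D' ∧ D'.size ≤ D.size + 2 * 2 ^ s ∧
          ∃ w, Computes D' w (fun z => (Finset.univ.toList : List (Fin s → Bool)).any
            (fun q => Rspec A B t q z && IndSpec A B (decide (t % 2 = 0)) q tg z)) := by
      intro tg D heD
      obtain ⟨D1, heD1, hszD1, hAnds⟩ := build_many D
        (Finset.univ.toList : List (Fin s → Bool))
        (fun q => fun z => Rspec A B t q z && IndSpec A B (decide (t % 2 = 0)) q tg z) 1 (by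
          intro D2 heD2 q _
          obtain ⟨wr, hwr⟩ := hR q
          obtain ⟨wi, hwi⟩ := hind (decide (t % 2 = 0)) q tg
          have hwr2 := (hwr.mono heD).mono heD2
          have hwi2 := ((hwi.mono heC).mono heD).mono heD2
          refine ⟨push D2 .and wr wi hwr2.1 hwi2.1, push_ext D2 .and wr wi hwr2.1 hwi2.1,
            le_of_eq rfl, 2 * n + D2.size,
            (push_computes D2 .and wr wi hwr2 hwi2).congr (fun z => rfl)⟩)
      obtain ⟨D2, heD2, hszD2, w, hw⟩ := bigOr D1
        ((Finset.univ.toList : List (Fin s → Bool)).map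
          (fun q => fun z => Rspec A B t q z && IndSpec A B (decide (t % 2 = 0)) q tg z))
        (by
          intro g hg
          obtain ⟨q, hq, rfl⟩ := List.mem_map.mp hg
          exact hAnds q hq)
        ((hTF0.mono ((heC.trans heD).trans heD1)).2)
      refine ⟨D2, heD1.trans heD2, ?_, w, hw.congr (fun z => any_map_pointwise _ _ z)⟩
      rw [List.length_map, hlenq] at hszD2
      rw [hlenq] at hszD1
      omega
    obtain ⟨C1, he1, hsz1, hR1⟩ := build_many C'
      (Finset.univ.toList : List (Fin s → Bool))
      (fun q' => Rspec A B (t + 1) q') (2 * 2 ^ s) (by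
        intro D heD q' _
        obtain ⟨D', heD', hszD', w, hw⟩ := orbuild (Sum.inl q') D heD
        exact ⟨D', heD', hszD', w, hw.congr (fun z => (Rspec_succ A B t q' z).symm)⟩)
    obtain ⟨C2, he2, hsz2, w2, hw2⟩ := orbuild (Sum.inr true) C1 he1
    obtain ⟨wh, hwh⟩ := hH
    have hwh2 := (hwh.mono he1).mono he2
    have hp := push_computes C2 .or wh w2 hwh2 hw2
    have hpsz : (push C2 .or wh w2 hwh2.1 hw2.1).size = C2.size + 1 := rfl
    refine ⟨push C2 .or wh w2 hwh2.1 hw2.1,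
      (he1.trans he2).trans (push_ext C2 .or wh w2 hwh2.1 hw2.1), ?_, ?_, ?_⟩
    · rw [hlenq] at hsz1
      linarith
    · intro q
      obtain ⟨w, hw⟩ := hR1 q (Finset.mem_toList.mpr (Finset.mem_univ q))
      exact ⟨w, (hw.mono he2).mono (push_ext C2 .or wh w2 hwh2.1 hw2.1)⟩
    · exact ⟨2 * n + C2.size, hp.congr (fun z => (Hspec_succ A B t z).symm)⟩
  have iter : ∀ T : ℕ, ∃ C', Ext C0 C' ∧
      C'.size ≤ C0.size + T * (2 * 2 ^ s * 2 ^ s + (2 * 2 ^ s + 1)) ∧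
      (∀ q, ∃ w, Computes C' w (Rspec A B T q)) ∧ (∃ w, Computes C' w (Hspec A B T)) := by
    intro T
    induction T with
    | zero =>
      refine ⟨C0, Ext.refl C0, by omega, fun q => ?_, ?_⟩
      · by_cases hq : q = (fun _ => false)
        · refine ⟨hTF0.1.choose, hTF0.1.choose_spec.congr (fun z => ?_)⟩
          simp [Rspec, protoRun, hq]
        · refine ⟨hTF0.2.choose, hTF0.2.choose_spec.congr (fun z => ?_)⟩
          simp only [Rspec, protoRun]
          symm
          apply decide_eq_false
          intro h
          exact hq (Sum.inl_injective h).symm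
      · refine ⟨hTF0.2.choose, hTF0.2.choose_spec.congr (fun z => ?_)⟩
        simp [Hspec, protoRun]
    | succ T ih =>
      obtain ⟨C', he', hsz', hR', hH'⟩ := ih
      obtain ⟨C'', he'', hsz'', hR'', hH''⟩ := layer T C' he' hR' hH'
      refine ⟨C'', he'.trans he'', ?_, hR'', hH''⟩
      have hmul : (T + 1) * (2 * 2 ^ s * 2 ^ s + (2 * 2 ^ s + 1))
          = T * (2 * 2 ^ s * 2 ^ s + (2 * 2 ^ s + 1))
            + (2 * 2 ^ s * 2 ^ s + (2 * 2 ^ s + 1)) := by ring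
      rw [hmul]
      linarith
  obtain ⟨Clay, helay, hszlay, _, hwH⟩ := iter (2 * 2 ^ s + 1)
  exact ⟨Clay, by linarith, hwH⟩

end SP
namespace SP

lemma main_aux {n s : ℕ} (hn : 1 ≤ n)
    (A B : (Fin n → Bool) → (Fin s → Bool) → (Fin s → Bool) ⊕ Bool) :
    ∃ C : Circuit (2 * n),
      C.size ≤ 3 + (n + 2) * 2 ^ n * (2 * (2 ^ s * (2 ^ s + 2)))
        + (2 * 2 ^ s + 1) * (2 * 2 ^ s * 2 ^ s + (2 * 2 ^ s + 1)) + 1 ∧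
      ∀ z : Fin (2 * n) → Bool,
        C.eval z = decide (protoRun A B (leftIn z) (rightIn z) (2 * 2 ^ s + 1)
          = Sum.inr true) := by
  obtain ⟨Clay, hsz, w, hw⟩ := layers_main A B hn
  have hp := push_computes Clay .or w w hw hw
  have hpsz : (push Clay .or w w hw.1 hw.1).size = Clay.size + 1 := rfl
  refine ⟨push Clay .or w w hw.1 hw.1, by omega, fun z => ?_⟩
  have hout : ((push Clay .or w w hw.1 hw.1).out : ℕ) = Clay.size := rfl
  have hrange : 2 * n + Clay.size < 2 * n + (push Clay .or w w hw.1 hw.1).size := by omega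
  have heval : (push Clay .or w w hw.1 hw.1).eval z
      = wireN (push Clay .or w w hw.1 hw.1) z (2 * n + Clay.size) := by
    rw [Circuit.eval, wireN, dif_pos hrange]
    simp only [hout]
  rw [heval, hp.2 z]
  simp [gval, Hspec]

theorem main_arith {n s : ℕ} (hn : 1 ≤ n) (hs : 1 ≤ s) (hsn : s ≤ n) :
    3 + (n + 2) * 2 ^ n * (2 * (2 ^ s * (2 ^ s + 2)))
      + (2 * 2 ^ s + 1) * (2 * 2 ^ s * 2 ^ s + (2 * 2 ^ s + 1)) + 1
      ≤ 32 * n * 2 ^ (n + 2 * s) := by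
  have hPQ : 2 ^ s ≤ 2 ^ n := Nat.pow_le_pow_right (by norm_num) hsn
  have hP2 : 2 ≤ 2 ^ s := by
    calc 2 = 2 ^ 1 := by norm_num
    _ ≤ 2 ^ s := Nat.pow_le_pow_right (by norm_num) hs
  have hQ2 : 2 ≤ 2 ^ n := le_trans hP2 hPQ
  have hsplit : 2 ^ (n + 2 * s) = 2 ^ n * (2 ^ s * 2 ^ s) := by
    rw [show n + 2 * s = n + s + s by ring, pow_add, pow_add, mul_assoc]
  rw [hsplit]
  set P := 2 ^ s with hP
  set Q := 2 ^ n with hQ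
  have h1 : (n + 2) * Q * (2 * (P * (P + 2))) ≤ 12 * (n * (Q * (P * P))) := by
    have ha : n + 2 ≤ 3 * n := by omega
    have hb : P + 2 ≤ 2 * P := by omega
    calc (n + 2) * Q * (2 * (P * (P + 2)))
        ≤ (3 * n) * Q * (2 * (P * (2 * P))) := by
          apply Nat.mul_le_mul (Nat.mul_le_mul ha le_rfl)
          exact Nat.mul_le_mul le_rfl (Nat.mul_le_mul le_rfl hb)
      _ = 12 * (n * (Q * (P * P))) := by ring
  have h2 : (2 * P + 1) * (2 * P * P + (2 * P + 1)) ≤ 15 * (n * (Q * (P * P))) := by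
    have ha : 2 * P + 1 ≤ 3 * P := by omega
    have hb : 2 * P * P + (2 * P + 1) ≤ 4 * (P * P) := by nlinarith
    calc (2 * P + 1) * (2 * P * P + (2 * P + 1))
        ≤ (3 * P) * (4 * (P * P)) := Nat.mul_le_mul ha hb
      _ = 12 * (P * (P * P)) := by ring
      _ ≤ 12 * (Q * (P * P)) := by
          apply Nat.mul_le_mul le_rfl
          exact Nat.mul_le_mul hPQ le_rfl
      _ ≤ 15 * (n * (Q * (P * P))) := by
          have : Q * (P * P) ≤ n * (Q * (P * P)) := Nat.le_mul_of_pos_left _ (by omega)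
          nlinarith
  have h0 : 4 ≤ n * (Q * (P * P)) := by
    have : 2 * (2 * 2) ≤ Q * (P * P) :=
      Nat.mul_le_mul hQ2 (Nat.mul_le_mul hP2 hP2)
    have h8 : 8 ≤ Q * (P * P) := by omega
    calc 4 ≤ 8 := by norm_num
    _ ≤ Q * (P * P) := h8
    _ ≤ n * (Q * (P * P)) := Nat.le_mul_of_pos_left _ (by omega)
  have hgoal : 32 * n * (Q * (P * P)) = 32 * (n * (Q * (P * P))) := by ring
  rw [hgoal]
  omega

end SP

/-- There is an absolute constant `c` such that for all `n ≥ 1` and `1 ≤ s ≤ n`, every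
function `f : {0,1}^n × {0,1}^n → {0,1}` computed by a space-`s` communication protocol
is computed by a Boolean circuit with `2n` inputs of size at most `c · n · 2^(n + 2s)`. -/
theorem space_protocol_to_circuit : ∃ c : ℕ, ∀ n s : ℕ, 1 ≤ n → 1 ≤ s → s ≤ n →
    ∀ f : (Fin n → Bool) × (Fin n → Bool) → Bool,
      (∃ A B : (Fin n → Bool) → (Fin s → Bool) → (Fin s → Bool) ⊕ Bool,
        ProtoComputes A B f) →
      ∃ C : Circuit (2 * n), C.size ≤ c * n * 2 ^ (n + 2 * s) ∧
        ∀ x y : Fin n → Bool, C.eval (joinInput x y) = f (x, y) := by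
  refine ⟨32, fun n s hn hs hsn f ⟨A, B, hAB⟩ => ?_⟩
  obtain ⟨C, hsz, hC⟩ := SP.main_aux hn A B
  refine ⟨C, le_trans hsz (SP.main_arith hn hs hsn), fun x y => ?_⟩
  rw [hC, SP.leftIn_join, SP.rightIn_join]
  obtain ⟨t0, ht0⟩ := hAB x y
  rw [SP.protoRun_halt_by A B x y ht0]
  cases hf : f (x, y) <;> simp [hf]
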